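/- Let p be a prime with p > 3 and q = (2^(p-1) - 1)/p. Then in ZMod p, S_00 = S_11 = (1/2)·q^2, where S_00 (resp. S_11) is the sum of 1/(ij) over pairs 0 < i < j < p with both i and j even (resp. both odd), and 1/2 is the inverse of 2 in ZMod p. -/

import Mathlib

open Finset

-- reindex sum over Ioo 0 p by units of ZMod p
lemma aux_sum_Ioo_units (p : ℕ) [Fact p.Prime] {M : Type*} [AddCommMonoid M] (g : ZMod p → M) :
    ∑ i ∈ Finset.Ioo 0 p, g (i : ZMod p) = ∑ x : (ZMod p)ˣ, g x := by
  haveI : NeZero p := ⟨(Fact.out : p.Prime).ne_zero⟩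
  refine Finset.sum_bij' (fun a ha => ZMod.unitOfCoprime a
      (Nat.coprime_comm.mp (((Fact.out : p.Prime).coprime_iff_not_dvd).mpr (by
        rw [Finset.mem_Ioo] at ha
        exact fun hd => absurd (Nat.le_of_dvd ha.1 hd) (not_le.mpr ha.2)))))
    (fun x _ => (x : ZMod p).val) ?_ ?_ ?_ ?_ ?_
  · intro a _; exact Finset.mem_univ _
  · intro x _
    rw [Finset.mem_Ioo]
    refine ⟨Nat.pos_of_ne_zero ?_, ZMod.val_lt _⟩
    rw [Ne, ZMod.val_eq_zero]
    exact x.ne_zero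
  · intro a ha
    show ((ZMod.unitOfCoprime a _ : (ZMod p)ˣ) : ZMod p).val = a
    rw [ZMod.coe_unitOfCoprime]
    exact ZMod.val_cast_of_lt (Finset.mem_Ioo.mp ha).2
  · intro x _
    refine Units.ext ?_
    rw [ZMod.coe_unitOfCoprime, ZMod.natCast_val, ZMod.cast_id]
  · intro a _
    rw [ZMod.coe_unitOfCoprime]

lemma aux_sum_inv_sq (p : ℕ) [Fact p.Prime] (hp3 : 3 < p) :
    ∑ i ∈ Finset.Ioo 0 p, ((i : ZMod p)⁻¹) ^ 2 = 0 := by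
  rw [aux_sum_Ioo_units p (fun z => (z⁻¹) ^ 2)]
  have h1 : ∀ x : (ZMod p)ˣ, ((x : ZMod p)⁻¹) ^ 2 = (((x⁻¹ : (ZMod p)ˣ) : ZMod p)) ^ 2 := by
    intro x; rw [← Units.val_inv_eq_inv_val]
  simp_rw [h1]
  rw [show (∑ x : (ZMod p)ˣ, (((x⁻¹ : (ZMod p)ˣ) : ZMod p)) ^ 2)
      = ∑ x : (ZMod p)ˣ, ((x : ZMod p)) ^ 2 from
    Equiv.sum_comp (Equiv.inv (ZMod p)ˣ) (fun x : (ZMod p)ˣ => ((x : ZMod p)) ^ 2)]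
  classical
  rw [FiniteField.sum_pow_units, if_neg]
  rw [ZMod.card]
  intro hd
  have := Nat.le_of_dvd (by norm_num) hd
  omega

-- flip i ↦ p - i : odd ↔ even
lemma aux_flip (p : ℕ) (hp : p.Prime) (hp3 : 3 < p) {M : Type*} [AddCommMonoid M] (g : ZMod p → M) :
    ∑ i ∈ (Finset.Ioo 0 p).filter (fun i => Odd i), g (i : ZMod p)
      = ∑ i ∈ (Finset.Ioo 0 p).filter (fun i => Even i), g (-(i : ZMod p)) := by
  have hpo : Odd p := hp.odd_of_ne_two (by omega)
  refine Finset.sum_bij' (fun a _ => p - a) (fun a _ => p - a) ?_ ?_ ?_ ?_ ?_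
  · intro a ha
    simp only [Finset.mem_filter, Finset.mem_Ioo] at ha ⊢
    refine ⟨⟨by omega, by omega⟩, Nat.Odd.sub_odd hpo ha.2⟩
  · intro a ha
    simp only [Finset.mem_filter, Finset.mem_Ioo] at ha ⊢
    refine ⟨⟨by omega, by omega⟩, ?_⟩
    rcases Nat.even_or_odd (p - a) with h | h
    · exfalso
      have : Even p := by
        have := Even.add h ha.2
        rwa [Nat.sub_add_cancel (by omega : a ≤ p)] at this
      exact (Nat.not_odd_iff_even.mpr this) hpo
    · exact h
  · intro a ha
    simp only [Finset.mem_filter, Finset.mem_Ioo] at ha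
    show p - (p - a) = a
    omega
  · intro a ha
    simp only [Finset.mem_filter, Finset.mem_Ioo] at ha
    show p - (p - a) = a
    omega
  · intro a ha
    simp only [Finset.mem_filter, Finset.mem_Ioo] at ha
    congr 1
    have : ((p - a : ℕ) : ZMod p) = (p : ZMod p) - (a : ZMod p) := by
      rw [Nat.cast_sub (by omega : a ≤ p)]
    rw [this, ZMod.natCast_self, zero_sub, neg_neg]

lemma aux_choose_sub_one (p : ℕ) [hpf : Fact p.Prime] :
    ∀ k, k ≤ p - 1 → ((p - 1).choose k : ZMod p) = (-1) ^ k := by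
  have hp := hpf.out
  intro k
  induction k with
  | zero => simp
  | succ k ih =>
    intro hk
    have hk' : k ≤ p - 1 := by omega
    have hchoose : (p - 1).choose k + (p - 1).choose (k + 1) = p.choose (k + 1) := by
      have h := Nat.choose_succ_succ (p - 1) k
      simp only [Nat.succ_eq_add_one] at h
      rw [show p - 1 + 1 = p from by omega] at h
      omega
    have hdvd : p ∣ p.choose (k + 1) := hp.dvd_choose_self (by omega) (by omega)
    have hcast : ((p.choose (k + 1) : ℕ) : ZMod p) = 0 :=
      (ZMod.natCast_eq_zero_iff _ _).mpr hdvd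
    have := congrArg (fun n : ℕ => (n : ZMod p)) hchoose
    simp only [Nat.cast_add] at this
    rw [hcast, ih hk'] at this
    have : ((p - 1).choose (k + 1) : ZMod p) = -(-1) ^ k := by linear_combination this
    rw [this, pow_succ]
    ring

lemma aux_c_cast (p : ℕ) [hpf : Fact p.Prime] (k : ℕ) (hk : k ∈ Finset.Ioo 0 p) :
    ((p.choose k / p : ℕ) : ZMod p) = (-1) ^ (k - 1) * (k : ZMod p)⁻¹ := by
  have hp := hpf.out
  rw [Finset.mem_Ioo] at hk
  have hdvd : p ∣ p.choose k := hp.dvd_choose_self (by omega) hk.2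
  set c := p.choose k / p with hc
  have hpc : p * c = p.choose k := Nat.mul_div_cancel' hdvd
  have hmul : p * ((p - 1).choose (k - 1)) = p.choose k * k := by
    have h := Nat.add_one_mul_choose_eq (p - 1) (k - 1)
    rwa [show p - 1 + 1 = p from by omega, show k - 1 + 1 = k from by omega] at h
  have hkey : (p - 1).choose (k - 1) = c * k := by
    apply Nat.eq_of_mul_eq_mul_left hp.pos
    rw [hmul, ← hpc, mul_assoc]
  have hcast := congrArg (fun n : ℕ => (n : ZMod p)) hkey
  simp only [Nat.cast_mul] at hcast
  rw [aux_choose_sub_one p (k - 1) (by omega)] at hcast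
  have hkne : (k : ZMod p) ≠ 0 := by
    rw [Ne, ZMod.natCast_eq_zero_iff]
    exact fun hd => absurd (Nat.le_of_dvd hk.1 hd) (not_le.mpr hk.2)
  rw [eq_comm, mul_inv_eq_iff_eq_mul₀ hkne]
  exact hcast

lemma aux_sum_c (p : ℕ) [hpf : Fact p.Prime] (hp3 : 3 < p) :
    ∑ k ∈ Finset.Ioo 0 p, p.choose k / p = 2 * ((2 ^ (p - 1) - 1) / p) := by
  have hp := hpf.out
  have hq : p ∣ 2 ^ (p - 1) - 1 := by
    have h2 : (2 : ZMod p) ≠ 0 := by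
      rw [Ne, show (2 : ZMod p) = ((2 : ℕ) : ZMod p) by norm_cast,
        ZMod.natCast_eq_zero_iff]
      intro hd
      have := Nat.le_of_dvd (by norm_num) hd
      omega
    have hflt : (2 : ZMod p) ^ (p - 1) = 1 := ZMod.pow_card_sub_one_eq_one h2
    rw [← ZMod.natCast_eq_zero_iff]
    have h1 : (1 : ℕ) ≤ 2 ^ (p - 1) := Nat.one_le_two_pow
    push_cast [h1]
    rw [hflt]; ring
  have hdvd : ∀ k ∈ Finset.Ioo 0 p, p ∣ p.choose k := by
    intro k hk
    rw [Finset.mem_Ioo] at hk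
    exact hp.dvd_choose_self (by omega) hk.2
  have hsum : ∑ k ∈ Finset.Ioo 0 p, p.choose k = 2 ^ p - 2 := by
    have hrange : Finset.range (p + 1) = insert 0 (insert p (Finset.Ioo 0 p)) := by
      ext x
      simp only [Finset.mem_range, Finset.mem_insert, Finset.mem_Ioo]
      omega
    have h := Nat.sum_range_choose p
    rw [hrange, Finset.sum_insert (by
        simp only [Finset.mem_insert, Finset.mem_Ioo, not_or]
        omega),
      Finset.sum_insert (by simp only [Finset.mem_Ioo]; omega)] at h
    simp only [Nat.choose_zero_right, Nat.choose_self] at h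
    have h2p : (2 : ℕ) ≤ 2 ^ p := by
      calc (2:ℕ) = 2^1 := rfl
      _ ≤ 2 ^ p := Nat.pow_le_pow_right (by norm_num) hp.one_lt.le
    omega
  apply Nat.eq_of_mul_eq_mul_left hp.pos
  rw [Finset.mul_sum]
  rw [Finset.sum_congr rfl (fun k hk => Nat.mul_div_cancel' (hdvd k hk)), hsum]
  rw [show p * (2 * ((2 ^ (p - 1) - 1) / p)) = 2 * (p * ((2 ^ (p - 1) - 1) / p)) by ring,
    Nat.mul_div_cancel' hq]
  have h1 : (1:ℕ) ≤ 2 ^ (p - 1) := Nat.one_le_two_pow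
  have h2 : 2 * 2 ^ (p - 1) = 2 ^ p := by
    rw [← pow_succ']
    congr 1
    omega
  omega

-- the key identity: sum over even of inverses = -q
lemma aux_even_inv (p : ℕ) [hpf : Fact p.Prime] (hp3 : 3 < p) :
    ∑ i ∈ (Finset.Ioo 0 p).filter (fun i => Even i), (i : ZMod p)⁻¹
      = -(((2 ^ (p - 1) - 1) / p : ℕ) : ZMod p) := by
  have hp := hpf.out
  set B := ∑ i ∈ (Finset.Ioo 0 p).filter (fun i => Even i), (i : ZMod p)⁻¹ with hB
  set A := ∑ i ∈ (Finset.Ioo 0 p).filter (fun i => Odd i), (i : ZMod p)⁻¹ with hA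
  have hAB : A = -B := by
    rw [hA, aux_flip p hp hp3 (fun z => z⁻¹), hB]
    simp only [inv_neg]
    exact Finset.sum_neg_distrib _
  have h2 : (2 : ZMod p) ≠ 0 := by
    rw [Ne, show (2 : ZMod p) = ((2 : ℕ) : ZMod p) by norm_cast,
      ZMod.natCast_eq_zero_iff]
    intro hd
    have := Nat.le_of_dvd (by norm_num) hd
    omega
  have hsumc : (2 : ZMod p) * (((2 ^ (p - 1) - 1) / p : ℕ) : ZMod p)
      = ∑ k ∈ Finset.Ioo 0 p, ((p.choose k / p : ℕ) : ZMod p) := by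
    rw [← Nat.cast_sum]
    rw [aux_sum_c p hp3]
    push_cast
    ring
  rw [Finset.sum_congr rfl (fun k hk => aux_c_cast p k hk)] at hsumc
  have hsplit : ∑ k ∈ Finset.Ioo 0 p, (-1 : ZMod p) ^ (k - 1) * (k : ZMod p)⁻¹ = A - B := by
    rw [← Finset.sum_filter_add_sum_filter_not (Finset.Ioo 0 p) (fun k => Odd k)]
    have hodd : ∑ k ∈ (Finset.Ioo 0 p).filter (fun k => Odd k),
        (-1 : ZMod p) ^ (k - 1) * (k : ZMod p)⁻¹ = A := by
      rw [hA]
      apply Finset.sum_congr rfl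
      intro k hk
      simp only [Finset.mem_filter] at hk
      rw [Even.neg_one_pow (by rcases hk.2 with ⟨m, hm⟩; exact ⟨m, by omega⟩), one_mul]
    have heven : ∑ k ∈ (Finset.Ioo 0 p).filter (fun k => ¬ Odd k),
        (-1 : ZMod p) ^ (k - 1) * (k : ZMod p)⁻¹ = -B := by
      rw [hB, ← Finset.sum_neg_distrib]
      apply Finset.sum_congr
      · apply Finset.filter_congr
        intro x _
        simp only [Nat.not_odd_iff_even]
      · intro k hk
        simp only [Finset.mem_filter, Finset.mem_Ioo] at hk
        have hko : Odd (k - 1) := by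
          rcases hk.2 with ⟨m, hm⟩
          exact ⟨m - 1, by omega⟩
        rw [Odd.neg_one_pow hko]
        ring
    rw [hodd, heven]
    ring
  rw [hsplit, hAB] at hsumc
  have h3 : (2:ZMod p) * (((2 ^ (p - 1) - 1) / p : ℕ) : ZMod p) = 2 * (-B) := by
    rw [hsumc]; ring
  have h4 := mul_left_cancel₀ h2 h3
  linear_combination h4

-- generic square-of-sum decomposition
lemma aux_double {R : Type*} [CommRing R] (s : Finset ℕ) (f : ℕ → R) :
    2 * (∑ i ∈ s, ∑ j ∈ s.filter (fun j => i < j), f i * f j) + ∑ i ∈ s, (f i) ^ 2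
      = (∑ i ∈ s, f i) ^ 2 := by
  classical
  have hsq : (∑ i ∈ s, f i) ^ 2 = ∑ i ∈ s, ∑ j ∈ s, f i * f j := by
    rw [sq, Finset.sum_mul_sum]
  rw [hsq]
  have hsplit : ∀ i ∈ s, ∑ j ∈ s, f i * f j
      = (∑ j ∈ s.filter (fun j => i < j), f i * f j)
        + ((∑ j ∈ s.filter (fun j => j < i), f i * f j) + (f i) ^ 2) := by
    intro i hi
    rw [← Finset.sum_filter_add_sum_filter_not s (fun j => i < j) (fun j => f i * f j)]
    congr 1
    have hset : s.filter (fun j => ¬ i < j) = insert i (s.filter (fun j => j < i)) := by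
      ext j
      simp only [Finset.mem_filter, Finset.mem_insert]
      constructor
      · rintro ⟨hj, hij⟩
        rcases Nat.lt_or_ge j i with h | h
        · exact Or.inr ⟨hj, h⟩
        · exact Or.inl (by omega)
      · rintro (rfl | ⟨hj, hij⟩)
        · exact ⟨hi, by omega⟩
        · exact ⟨hj, by omega⟩
    rw [hset, Finset.sum_insert (by simp)]
    rw [sq]
    ring
  rw [Finset.sum_congr rfl hsplit]
  rw [Finset.sum_add_distrib, Finset.sum_add_distrib]
  have hswap : ∑ i ∈ s, ∑ j ∈ s.filter (fun j => j < i), f i * f j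
      = ∑ i ∈ s, ∑ j ∈ s.filter (fun j => i < j), f i * f j := by
    rw [Finset.sum_comm' (s' := fun j => s.filter (fun i => j < i)) (t' := s)
      (by intro x y; simp only [Finset.mem_filter]; tauto)]
    apply Finset.sum_congr rfl
    intro i _
    apply Finset.sum_congr rfl
    intro j _
    ring
  rw [hswap]
  ring

theorem S00_S11_value (p : ℕ) (hp : p.Prime) (hp3 : 3 < p) :
    ((∑ i ∈ (Finset.Ioo 0 p).filter (fun i => Even i),
        ∑ j ∈ (Finset.Ioo i p).filter (fun j => Even j),
          ((i : ZMod p) * (j : ZMod p))⁻¹)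
      = (∑ i ∈ (Finset.Ioo 0 p).filter (fun i => Odd i),
          ∑ j ∈ (Finset.Ioo i p).filter (fun j => Odd j),
            ((i : ZMod p) * (j : ZMod p))⁻¹)) ∧
    ((∑ i ∈ (Finset.Ioo 0 p).filter (fun i => Odd i),
        ∑ j ∈ (Finset.Ioo i p).filter (fun j => Odd j),
          ((i : ZMod p) * (j : ZMod p))⁻¹)
      = (2 : ZMod p)⁻¹ * (((2 ^ (p - 1) - 1) / p : ℕ) : ZMod p) ^ 2) := by
  haveI : Fact p.Prime := ⟨hp⟩
  set q : ZMod p := (((2 ^ (p - 1) - 1) / p : ℕ) : ZMod p) with hqdef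
  set f : ℕ → ZMod p := fun i => (i : ZMod p)⁻¹ with hfdef
  have h2 : (2 : ZMod p) ≠ 0 := by
    rw [Ne, show (2 : ZMod p) = ((2 : ℕ) : ZMod p) by norm_cast,
      ZMod.natCast_eq_zero_iff]
    intro hd
    have := Nat.le_of_dvd (by norm_num) hd
    omega
  -- single sums
  have hB : ∑ i ∈ (Finset.Ioo 0 p).filter (fun i => Even i), f i = -q :=
    aux_even_inv p hp3
  have hA : ∑ i ∈ (Finset.Ioo 0 p).filter (fun i => Odd i), f i = q := by
    calc ∑ i ∈ (Finset.Ioo 0 p).filter (fun i => Odd i), f i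
        = ∑ i ∈ (Finset.Ioo 0 p).filter (fun i => Even i), (-(i : ZMod p))⁻¹ :=
          aux_flip p hp hp3 (fun z => z⁻¹)
      _ = -∑ i ∈ (Finset.Ioo 0 p).filter (fun i => Even i), f i := by
          simp only [inv_neg]
          exact Finset.sum_neg_distrib _
      _ = q := by rw [hB, neg_neg]
  -- squared sums
  have htot : ∑ i ∈ Finset.Ioo 0 p, (f i) ^ 2 = 0 := aux_sum_inv_sq p hp3
  have hEO : ∑ i ∈ (Finset.Ioo 0 p).filter (fun i => Odd i), (f i) ^ 2
      = ∑ i ∈ (Finset.Ioo 0 p).filter (fun i => Even i), (f i) ^ 2 := by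
    rw [show (∑ i ∈ (Finset.Ioo 0 p).filter (fun i => Odd i), (f i) ^ 2)
        = ∑ i ∈ (Finset.Ioo 0 p).filter (fun i => Odd i),
            (fun z : ZMod p => (z⁻¹) ^ 2) (i : ZMod p) from rfl,
      aux_flip p hp hp3 (fun z => (z⁻¹) ^ 2)]
    simp [hfdef]
  have hsplitsq : ∑ i ∈ (Finset.Ioo 0 p).filter (fun i => Odd i), (f i) ^ 2
      + ∑ i ∈ (Finset.Ioo 0 p).filter (fun i => Even i), (f i) ^ 2 = 0 := by
    rw [← htot, ← Finset.sum_filter_add_sum_filter_not (Finset.Ioo 0 p) (fun i => Odd i)]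
    congr 1
    apply Finset.sum_congr
    · apply Finset.filter_congr
      intro x _
      simp only [Nat.not_odd_iff_even]
    · intros; rfl
  have hO : ∑ i ∈ (Finset.Ioo 0 p).filter (fun i => Odd i), (f i) ^ 2 = 0 := by
    have h2E : (2 : ZMod p) * ∑ i ∈ (Finset.Ioo 0 p).filter (fun i => Odd i), (f i) ^ 2 = 0 := by
      rw [two_mul]
      nth_rewrite 2 [hEO]
      exact hsplitsq
    rcases mul_eq_zero.mp h2E with h | h
    · exact absurd h h2
    · exact h
  have hE : ∑ i ∈ (Finset.Ioo 0 p).filter (fun i => Even i), (f i) ^ 2 = 0 := by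
    rw [← hEO]; exact hO
  -- inner filter rewriting
  have hinner : ∀ (P : ℕ → Prop) [DecidablePred P], ∀ i ∈ (Finset.Ioo 0 p).filter P,
      (Finset.Ioo i p).filter P = ((Finset.Ioo 0 p).filter P).filter (fun j => i < j) := by
    intro P _ i hi
    simp only [Finset.mem_filter, Finset.mem_Ioo] at hi
    ext j
    simp only [Finset.mem_filter, Finset.mem_Ioo]
    constructor
    · rintro ⟨⟨h1, h2⟩, h3⟩
      exact ⟨⟨⟨by omega, h2⟩, h3⟩, h1⟩
    · rintro ⟨⟨⟨h1, h2⟩, h3⟩, h4⟩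
      exact ⟨⟨h4, h2⟩, h3⟩
  have hsummand : ∀ i j : ℕ, ((i : ZMod p) * (j : ZMod p))⁻¹ = f i * f j := by
    intro i j
    rw [mul_inv]
  -- odd double sum
  have hSodd : ∑ i ∈ (Finset.Ioo 0 p).filter (fun i => Odd i),
      ∑ j ∈ (Finset.Ioo i p).filter (fun j => Odd j), ((i : ZMod p) * (j : ZMod p))⁻¹
      = ∑ i ∈ (Finset.Ioo 0 p).filter (fun i => Odd i),
          ∑ j ∈ ((Finset.Ioo 0 p).filter (fun j => Odd j)).filter (fun j => i < j),
            f i * f j := by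
    apply Finset.sum_congr rfl
    intro i hi
    rw [hinner (fun j => Odd j) i hi]
    exact Finset.sum_congr rfl (fun j _ => hsummand i j)
  have hSeven : ∑ i ∈ (Finset.Ioo 0 p).filter (fun i => Even i),
      ∑ j ∈ (Finset.Ioo i p).filter (fun j => Even j), ((i : ZMod p) * (j : ZMod p))⁻¹
      = ∑ i ∈ (Finset.Ioo 0 p).filter (fun i => Even i),
          ∑ j ∈ ((Finset.Ioo 0 p).filter (fun j => Even j)).filter (fun j => i < j),
            f i * f j := by
    apply Finset.sum_congr rfl
    intro i hi
    rw [hinner (fun j => Even j) i hi]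
    exact Finset.sum_congr rfl (fun j _ => hsummand i j)
  have hdO := aux_double ((Finset.Ioo 0 p).filter (fun i => Odd i)) f
  have hdE := aux_double ((Finset.Ioo 0 p).filter (fun i => Even i)) f
  rw [hO, hA] at hdO
  rw [hE, hB] at hdE
  have hOeq : ∑ i ∈ (Finset.Ioo 0 p).filter (fun i => Odd i),
      ∑ j ∈ (Finset.Ioo i p).filter (fun j => Odd j), ((i : ZMod p) * (j : ZMod p))⁻¹
      = (2 : ZMod p)⁻¹ * q ^ 2 := by
    rw [hSodd]
    have h2q : (2 : ZMod p) * ((2 : ZMod p)⁻¹ * q ^ 2) = q ^ 2 := by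
      field_simp
    apply mul_left_cancel₀ h2
    rw [h2q]
    linear_combination hdO
  have hEeq : ∑ i ∈ (Finset.Ioo 0 p).filter (fun i => Even i),
      ∑ j ∈ (Finset.Ioo i p).filter (fun j => Even j), ((i : ZMod p) * (j : ZMod p))⁻¹
      = (2 : ZMod p)⁻¹ * q ^ 2 := by
    rw [hSeven]
    have h2q : (2 : ZMod p) * ((2 : ZMod p)⁻¹ * q ^ 2) = q ^ 2 := by
      field_simp
    apply mul_left_cancel₀ h2
    rw [h2q]
    linear_combination hdE
  exact ⟨by rw [hOeq, hEeq], hOeq⟩
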